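/- Let K ≥ 1 and let F be an invertible K×K real matrix. Then there exist integer vectors a_1, …, a_K ∈ ℤ^K which are linearly independent over ℝ (when viewed as real vectors) and satisfy ∏_{k=1}^K ‖F a_k‖² ≤ K^K · (det F)². -/

import Mathlib

open Matrix

open Finset MeasureTheory
open scoped RealInnerProductSpace

variable {K : ℕ}

lemma aux_finite_stmt3 (F : Matrix (Fin K) (Fin K) ℝ) (hF : IsUnit F) (r : ℝ) :
    {a : Fin K → ℤ | ∑ i, (F.mulVec (fun i => (a i : ℝ)) i) ^ 2 ≤ r}.Finite := by
  have hdet : IsUnit F.det := (Matrix.isUnit_iff_isUnit_det F).mp hF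
  set G := F⁻¹ with hG
  have hGF : G * F = 1 := Matrix.nonsing_inv_mul F hdet
  set s : ℝ := Real.sqrt (max r 0) with hs
  set C : ℝ := ∑ i : Fin K, ∑ j : Fin K, |G i j| * s with hC
  have hsnn : 0 ≤ s := Real.sqrt_nonneg _
  set B : ℤ := ⌈C⌉ with hB
  apply Set.Finite.subset (Set.finite_Icc (fun _ : Fin K => -B) (fun _ => B))
  intro a ha
  simp only [Set.mem_setOf_eq] at ha
  have key : ∀ i, |(a i : ℝ)| ≤ C := by
    intro i
    set y : Fin K → ℝ := F.mulVec (fun i => (a i : ℝ)) with hy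
    have hyb : ∀ j, |y j| ≤ s := by
      intro j
      rw [← Real.sqrt_sq_eq_abs]
      apply Real.sqrt_le_sqrt
      calc y j ^ 2 ≤ ∑ i, y i ^ 2 :=
            Finset.single_le_sum (f := fun i => y i ^ 2) (fun i _ => sq_nonneg _) (mem_univ j)
        _ ≤ r := ha
        _ ≤ max r 0 := le_max_left _ _
    have hrec : (fun i => (a i : ℝ)) = G.mulVec y := by
      rw [hy, Matrix.mulVec_mulVec, hGF, Matrix.one_mulVec]
    rw [show ((a i : ℝ)) = G.mulVec y i from congrFun hrec i]
    calc |G.mulVec y i| = |∑ j, G i j * y j| := rfl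
      _ ≤ ∑ j, |G i j * y j| := Finset.abs_sum_le_sum_abs _ _
      _ ≤ ∑ j, |G i j| * s := by
          refine Finset.sum_le_sum fun j _ => ?_
          rw [abs_mul]
          exact mul_le_mul_of_nonneg_left (hyb j) (abs_nonneg _)
      _ ≤ C := by
          refine Finset.single_le_sum (f := fun i => ∑ j, |G i j| * s) (fun i _ => ?_) (mem_univ i)
          exact Finset.sum_nonneg fun j _ => mul_nonneg (abs_nonneg _) hsnn
  refine Set.mem_Icc.mpr ⟨fun i => ?_, fun i => ?_⟩
  · have := (abs_le.mp (key i)).1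
    have h2 : (-B : ℝ) ≤ (a i : ℝ) := by
      have := Int.le_ceil C
      push_cast
      linarith
    exact_mod_cast h2
  · have := (abs_le.mp (key i)).2
    have h2 : (a i : ℝ) ≤ (B : ℝ) := le_trans this (Int.le_ceil C)
    exact_mod_cast h2

lemma aux_greedy_stmt3 (F : Matrix (Fin K) (Fin K) ℝ) (hF : IsUnit F) :
    ∀ n, n ≤ K → ∃ v : Fin n → (Fin K → ℤ),
      LinearIndependent ℝ (fun k => (fun i => (v k i : ℝ) : Fin K → ℝ)) ∧
      ∀ (k : Fin n) (a : Fin K → ℤ),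
        (fun i => (a i : ℝ)) ∉
          Submodule.span ℝ ((fun k => (fun i => (v k i : ℝ) : Fin K → ℝ)) '' Set.Iio k) →
        ∑ i, (F.mulVec (fun i => (v k i : ℝ)) i) ^ 2
          ≤ ∑ i, (F.mulVec (fun i => (a i : ℝ)) i) ^ 2 := by
  intro n
  induction n with
  | zero =>
      intro _
      exact ⟨fun x => x.elim0, linearIndependent_empty_type, fun k => k.elim0⟩
  | succ n ih =>
      intro hn1
      obtain ⟨v, hli, hmin⟩ := ih (le_of_lt hn1)
      set vc : Fin n → (Fin K → ℝ) := fun k => (fun i => (v k i : ℝ)) with hvc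
      -- there is an integer vector outside the span
      have hexists : ∃ a₀ : Fin K → ℤ, (fun i => (a₀ i : ℝ)) ∉ Submodule.span ℝ (Set.range vc) := by
        by_contra hcon
        push_neg at hcon
        have htop : Submodule.span ℝ (Set.range vc) = ⊤ := by
          rw [eq_top_iff, ← (Pi.basisFun ℝ (Fin K)).span_eq]
          rw [Submodule.span_le]
          rintro x ⟨l, rfl⟩
          have : (Pi.basisFun ℝ (Fin K)) l
              = (fun i => (((fun i => if i = l then (1:ℤ) else 0) i : ℤ) : ℝ)) := by
            funext i
            by_cases h : i = l <;> simp [Pi.basisFun_apply, Pi.single_apply, h]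
          rw [this]
          exact hcon _
        have h1 : Module.finrank ℝ (Submodule.span ℝ (Set.range vc)) ≤ n :=
          (finrank_range_le_card vc).trans (by simp)
        rw [htop] at h1
        rw [finrank_top] at h1
        have : Module.finrank ℝ (Fin K → ℝ) = K := by simp [Module.finrank_pi]
        omega
      obtain ⟨a₀, ha₀⟩ := hexists
      -- pick a minimizer
      set Q : (Fin K → ℤ) → ℝ := fun a => ∑ i, (F.mulVec (fun i => (a i : ℝ)) i) ^ 2 with hQ
      have hBfin : {a : Fin K → ℤ |
          (fun i => (a i : ℝ)) ∉ Submodule.span ℝ (Set.range vc) ∧ Q a ≤ Q a₀}.Finite :=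
        (aux_finite_stmt3 F hF (Q a₀)).subset (fun a ha => ha.2)
      obtain ⟨w, hwmem, hwmin⟩ := Set.exists_min_image _ Q hBfin ⟨a₀, ha₀, le_refl _⟩
      have hwglobal : ∀ a : Fin K → ℤ,
          (fun i => (a i : ℝ)) ∉ Submodule.span ℝ (Set.range vc) → Q w ≤ Q a := by
        intro a ha
        by_cases h : Q a ≤ Q a₀
        · exact hwmin a ⟨ha, h⟩
        · exact le_trans hwmem.2 (le_of_not_ge h)
      refine ⟨(Fin.snoc v w : Fin (n+1) → Fin K → ℤ), ?_, ?_⟩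
      · have hcomp : (fun k => (fun i => (((Fin.snoc v w : Fin (n+1) → Fin K → ℤ) k) i : ℝ) : Fin K → ℝ))
            = Fin.snoc vc (fun i => (w i : ℝ)) := by
          funext k
          refine Fin.lastCases ?_ (fun j => ?_) k <;> simp [hvc]
        rw [hcomp, linearIndependent_fin_snoc]
        exact ⟨hli, hwmem.1⟩
      · intro k a ha
        have hcomp : (fun k => (fun i => (((Fin.snoc v w : Fin (n+1) → Fin K → ℤ) k) i : ℝ) : Fin K → ℝ))
            = Fin.snoc vc (fun i => (w i : ℝ)) := by
          funext k
          refine Fin.lastCases ?_ (fun j => ?_) k <;> simp [hvc]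
        rw [hcomp] at ha
        revert ha
        refine Fin.lastCases ?_ (fun j => ?_) k <;> intro ha
        · -- k = last n
          have himg : (Fin.snoc vc (fun i => (w i : ℝ)) : Fin (n+1) → (Fin K → ℝ)) ''
              Set.Iio (Fin.last n) = Set.range vc := by
            ext x
            constructor
            · rintro ⟨k, hk, rfl⟩
              obtain ⟨j, rfl⟩ := Fin.exists_castSucc_eq.mpr (Fin.ne_last_of_lt hk)
              exact ⟨j, by simp⟩
            · rintro ⟨j, rfl⟩
              exact ⟨Fin.castSucc j, Fin.castSucc_lt_last j, by simp⟩
          rw [himg] at ha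
          simp only [Fin.snoc_last]
          exact hwglobal a ha
        · -- k = castSucc j
          have himg : (Fin.snoc vc (fun i => (w i : ℝ)) : Fin (n+1) → (Fin K → ℝ)) ''
              Set.Iio (Fin.castSucc j) = vc '' Set.Iio j := by
            ext x
            constructor
            · rintro ⟨k, hk, rfl⟩
              have hkn : k ≠ Fin.last n := by
                intro h
                rw [h] at hk
                exact absurd (Fin.castSucc_lt_last j) (not_lt_of_gt hk)
              obtain ⟨m, rfl⟩ := Fin.exists_castSucc_eq.mpr hkn
              refine ⟨m, ?_, by simp⟩
              simpa [Fin.castSucc_lt_castSucc_iff] using hk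
            · rintro ⟨m, hm, rfl⟩
              exact ⟨Fin.castSucc m, by simpa [Fin.castSucc_lt_castSucc_iff] using hm, by simp⟩
          rw [himg] at ha
          simp only [Fin.snoc_castSucc]
          exact hmin j a ha

lemma aux_minkowski_stmt3 (hK : 1 ≤ K) (M : Matrix (Fin K) (Fin K) ℝ) (hM : M.det ≠ 0) :
    ∃ a : Fin K → ℤ, a ≠ 0 ∧
      ∑ i, (M.mulVec (fun i => (a i : ℝ)) i) ^ 2
        ≤ (K : ℝ) * (|M.det| ^ ((K : ℝ)⁻¹)) ^ 2 := by
  have hKpos : 0 < K := hK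
  haveI : Nonempty (Fin K) := Fin.pos_iff_nonempty.mp hKpos
  haveI : Nontrivial (Fin K → ℝ) := by infer_instance
  have hdetpos : 0 < |M.det| := abs_pos.mpr hM
  haveI hMinv : Invertible M := M.invertibleOfIsUnitDet (isUnit_iff_ne_zero.mpr hM)
  set b : Module.Basis (Fin K) ℝ (Fin K → ℝ) :=
    (Pi.basisFun ℝ (Fin K)).map (M.toLinearEquiv' hMinv) with hb
  set c : ℝ := |M.det| ^ ((K : ℝ)⁻¹) with hc
  have hcpos : 0 < c := Real.rpow_pos_of_pos hdetpos _
  set s : Set (Fin K → ℝ) := Set.pi Set.univ (fun _ : Fin K => Set.Icc (-c) c) with hs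
  have h_symm : ∀ x ∈ s, -x ∈ s := by
    intro x hx
    simp only [hs, Set.mem_pi, Set.mem_univ, forall_true_left, Set.mem_Icc] at hx ⊢
    intro i
    obtain ⟨h1, h2⟩ := hx i
    constructor <;> simp only [Pi.neg_apply] <;> linarith
  have h_conv : Convex ℝ s := convex_pi (fun i _ => convex_Icc _ _)
  have h_cpt : IsCompact s := isCompact_univ_pi (fun i => isCompact_Icc)
  have hbdet : (Matrix.of ⇑b).det = M.det := by
    have : (Matrix.of ⇑b) = Mᵀ := by
      ext i j
      simp only [Matrix.of_apply, hb, Module.Basis.map_apply, Pi.basisFun_apply,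
        Matrix.toLinearEquiv'_apply, Matrix.transpose_apply, Matrix.toLin'_apply]
      show (M *ᵥ Pi.single i 1) j = M j i
      simp [Matrix.mulVec, dotProduct, Pi.single_apply, mul_ite, Finset.sum_ite_eq']
    rw [this, Matrix.det_transpose]
  have hck : c ^ K = |M.det| := by
    rw [hc, ← Real.rpow_natCast (|M.det| ^ ((K : ℝ)⁻¹)) K, ← Real.rpow_mul (abs_nonneg _)]
    rw [inv_mul_cancel₀ (by exact_mod_cast hKpos.ne' : (K : ℝ) ≠ 0), Real.rpow_one]
  have h_vol : volume (ZSpan.fundamentalDomain b) * 2 ^ (Module.finrank ℝ (Fin K → ℝ)) ≤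
      volume s := by
    rw [ZSpan.volume_fundamentalDomain, hbdet]
    have hfr : Module.finrank ℝ (Fin K → ℝ) = K := by simp
    rw [hfr, hs, volume_pi_pi]
    have : ∀ i : Fin K, volume (Set.Icc (-c) c) = ENNReal.ofReal (2 * c) := by
      intro i
      rw [Real.volume_Icc]
      ring_nf
    simp_rw [Real.volume_Icc]
    rw [Finset.prod_const]
    have h2c : ENNReal.ofReal (c - -c) = ENNReal.ofReal 2 * ENNReal.ofReal c := by
      rw [← ENNReal.ofReal_mul (by norm_num)]
      congr 1
      ring
    rw [Finset.card_univ, Fintype.card_fin, h2c, mul_pow, ← ENNReal.ofReal_pow hcpos.le, hck]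
    rw [show ENNReal.ofReal 2 = 2 by norm_num]
    rw [mul_comm]
  haveI : Countable (Submodule.span ℤ (Set.range ⇑b)).toAddSubgroup :=
    inferInstanceAs (Countable (Submodule.span ℤ (Set.range ⇑b)))
  obtain ⟨x, hx0, hxs⟩ :=
    exists_ne_zero_mem_lattice_of_measure_mul_two_pow_le_measure
      (ZSpan.isAddFundamentalDomain' b volume) h_symm h_conv h_cpt h_vol
  have hxmem : (x : Fin K → ℝ) ∈ Submodule.span ℤ (Set.range ⇑b) := x.2
  rw [Submodule.mem_span_range_iff_exists_fun] at hxmem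
  obtain ⟨n, hn⟩ := hxmem
  have hbn : ∑ i, n i • b i = M.mulVec (fun j => (n j : ℝ)) := by
    have h1 : ∀ i, n i • b i = Matrix.toLin' M ((n i : ℝ) • (Pi.single i (1:ℝ) : Fin K → ℝ)) := by
      intro i
      rw [LinearMap.map_smul, ← Int.cast_smul_eq_zsmul ℝ]
      congr 1
      show b i = M *ᵥ Pi.single i 1
      simp only [hb, Module.Basis.map_apply, Pi.basisFun_apply]
      rfl
    simp_rw [h1]
    rw [← map_sum]
    congr 1
    funext j
    simp [Pi.single_apply, mul_ite, Finset.sum_ite_eq', Matrix.mulVec, dotProduct,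
      mul_comm]
  refine ⟨n, ?_, ?_⟩
  · rintro rfl
    apply hx0
    have : (x : Fin K → ℝ) = 0 := by
      rw [← hn]
      simp
    exact Subtype.coe_injective (by simpa using this)
  · have hcoord : ∀ i, (M.mulVec (fun j => (n j : ℝ)) i) ∈ Set.Icc (-c) c := by
      intro i
      rw [← hbn, hn]
      exact hxs i (Set.mem_univ i)
    calc ∑ i, (M.mulVec (fun j => (n j : ℝ)) i) ^ 2
        ≤ ∑ _i : Fin K, c ^ 2 := by
          refine Finset.sum_le_sum fun i _ => ?_
          obtain ⟨h1, h2⟩ := hcoord i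
          exact sq_le_sq' h1 h2
      _ = (K : ℝ) * c ^ 2 := by
          rw [Finset.sum_const, Finset.card_univ, Fintype.card_fin, nsmul_eq_mul]

/-- For any invertible `K×K` real matrix `F` there exist linearly independent integer
vectors `a_1, …, a_K` with `∏ ‖F a_k‖² ≤ K^K (det F)²`. -/
theorem stmt_3 {K : ℕ} (hK : 1 ≤ K) (F : Matrix (Fin K) (Fin K) ℝ) (hF : IsUnit F) :
    ∃ a : Fin K → Fin K → ℤ,
      LinearIndependent ℝ (fun k => (fun i => (a k i : ℝ) : Fin K → ℝ)) ∧
      ∏ k, (∑ i, (F.mulVec (fun i => (a k i : ℝ)) i) ^ 2) ≤ (K : ℝ) ^ K * F.det ^ 2 := by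
  classical
  have hKpos : 0 < K := hK
  haveI : Nonempty (Fin K) := Fin.pos_iff_nonempty.mp hKpos
  have hdet : F.det ≠ 0 := by
    have := (Matrix.isUnit_iff_isUnit_det F).mp hF
    exact this.ne_zero
  haveI hFinv : Invertible F := F.invertibleOfIsUnitDet (isUnit_iff_ne_zero.mpr hdet)
  obtain ⟨v, hli, hmin⟩ := aux_greedy_stmt3 F hF K le_rfl
  set vc : Fin K → (Fin K → ℝ) := fun k => (fun i => (v k i : ℝ)) with hvc
  set φ : (Fin K → ℝ) ≃ₗ[ℝ] EuclideanSpace ℝ (Fin K) :=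
    (WithLp.linearEquiv 2 ℝ (Fin K → ℝ)).symm with hφ
  set g : (Fin K → ℝ) ≃ₗ[ℝ] EuclideanSpace ℝ (Fin K) :=
    (F.toLinearEquiv' hFinv).trans φ with hg
  have hgF : ∀ y : Fin K → ℝ, g y = φ (F.mulVec y) := fun y => rfl
  have hφnorm : ∀ y : Fin K → ℝ, ‖φ y‖ ^ 2 = ∑ i, (y i) ^ 2 := by
    intro y
    rw [EuclideanSpace.norm_eq, Real.sq_sqrt (by positivity)]
    congr 1
    funext i
    rw [Real.norm_eq_abs, sq_abs]
    rfl
  set w : Fin K → EuclideanSpace ℝ (Fin K) := fun k => g (vc k) with hw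
  have hwli : LinearIndependent ℝ w := by
    have := hli.map' g.toLinearMap g.ker
    exact this
  set lam : Fin K → ℝ := fun k => ‖w k‖ with hlam
  have hlampos : ∀ k, 0 < lam k := by
    intro k
    rw [hlam]
    simp only [norm_pos_iff]
    intro h
    have : vc k = 0 := by
      have h0 : g (vc k) = g 0 := by rw [map_zero]; exact h
      exact g.injective h0
    exact hli.ne_zero k this
  have hlamQ : ∀ k, lam k ^ 2 = ∑ i, (F.mulVec (vc k) i) ^ 2 := by
    intro k
    rw [hlam]
    simp only
    rw [hw]
    simp only
    rw [hgF, hφnorm]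
  -- monotonicity of lam
  have hlammono : ∀ k k' : Fin K, k ≤ k' → lam k ≤ lam k' := by
    intro k k' hkk
    have hnot : vc k' ∉ Submodule.span ℝ (vc '' Set.Iio k) := by
      apply hli.notMem_span_image
      simp only [Set.mem_Iio, not_lt]
      exact hkk
    have := hmin k (v k') hnot
    have hsq : lam k ^ 2 ≤ lam k' ^ 2 := by
      rw [hlamQ k, hlamQ k']
      exact this
    have h1 := Real.sqrt_le_sqrt hsq
    rwa [Real.sqrt_sq (hlampos k).le, Real.sqrt_sq (hlampos k').le] at h1
  -- Gram-Schmidt orthonormal basis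
  haveI : WellFoundedLT (Fin K) := Finite.to_wellFoundedLT
  have hrank : Module.finrank ℝ (EuclideanSpace ℝ (Fin K)) = K := finrank_euclideanSpace_fin
  set u : OrthonormalBasis (Fin K) ℝ (EuclideanSpace ℝ (Fin K)) :=
    InnerProductSpace.gramSchmidtOrthonormalBasis (hrank.trans (Fintype.card_fin K).symm) w with hu
  have hu_eq : ∀ i, u i = InnerProductSpace.gramSchmidtNormed ℝ w i := by
    intro i
    apply InnerProductSpace.gramSchmidtOrthonormalBasis_apply
    have h0 : InnerProductSpace.gramSchmidt ℝ w i ≠ 0 := InnerProductSpace.gramSchmidt_ne_zero i hwli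
    simp only [InnerProductSpace.gramSchmidtNormed]
    exact smul_ne_zero (by simpa using norm_ne_zero_iff.mpr h0) h0
  have hspan : ∀ j, Submodule.span ℝ (u '' Set.Iic j) = Submodule.span ℝ (w '' Set.Iic j) := by
    intro j
    have h1 : u '' Set.Iic j = InnerProductSpace.gramSchmidtNormed ℝ w '' Set.Iic j := by
      apply Set.image_congr
      intro i _
      exact hu_eq i
    rw [h1, InnerProductSpace.span_gramSchmidtNormed, InnerProductSpace.span_gramSchmidt_Iic]
  -- vanishing of coordinates
  have hvanish : ∀ (j : Fin K) (x : EuclideanSpace ℝ (Fin K)),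
      x ∈ Submodule.span ℝ (w '' Set.Iic j) → ∀ i, ¬ i ≤ j → ⟪u i, x⟫ = 0 := by
    intro j x hx i hij
    rw [← hspan j] at hx
    induction hx using Submodule.span_induction with
    | mem y hy =>
        obtain ⟨l, hl, rfl⟩ := hy
        refine u.orthonormal.2 ?_
        intro h
        rw [h] at hij
        exact hij hl
    | zero => exact inner_zero_right _
    | add y z _ _ hy hz => rw [inner_add_right, hy, hz, add_zero]
    | smul c y _ hy => rw [inner_smul_right, hy, mul_zero]
  -- the rescaling map D
  set Dmap : EuclideanSpace ℝ (Fin K) →ₗ[ℝ] EuclideanSpace ℝ (Fin K) :=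
    u.toBasis.constr ℝ (fun i => (lam i)⁻¹ • u i) with hD
  have hDu : ∀ i, Dmap (u i) = (lam i)⁻¹ • u i := by
    intro i
    conv_lhs => rw [hD, show u i = u.toBasis i from (congrFun u.coe_toBasis i).symm,
      Module.Basis.constr_basis]
  have hDdet : LinearMap.det Dmap = ∏ i, (lam i)⁻¹ := by
    rw [← LinearMap.det_toMatrix u.toBasis]
    have : LinearMap.toMatrix u.toBasis u.toBasis Dmap
        = Matrix.diagonal (fun i => (lam i)⁻¹) := by
      ext i j
      rw [LinearMap.toMatrix_apply, show u.toBasis j = u j from congrFun u.coe_toBasis j, hDu,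
        _root_.map_smul]
      rw [show u j = u.toBasis j from (congrFun u.coe_toBasis j).symm, Module.Basis.repr_self]
      simp only [Matrix.diagonal_apply, Finsupp.single_apply, smul_eq_mul, mul_ite, mul_one,
        mul_zero]
      by_cases h : i = j <;> simp [h, Finsupp.single_apply, eq_comm]
    rw [this, Matrix.det_diagonal]
  have hDrepr : ∀ (x : EuclideanSpace ℝ (Fin K)) (i : Fin K),
      u.repr (Dmap x) i = (lam i)⁻¹ * u.repr x i := by
    intro x i
    have h1 : Dmap x = ∑ j, ((lam j)⁻¹ * u.repr x j) • u j := by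
      conv_lhs => rw [← u.sum_repr x]
      rw [map_sum]
      congr 1
      funext j
      rw [LinearMap.map_smul, hDu, smul_smul, mul_comm]
    rw [u.repr_apply_apply, h1, inner_sum]
    have horth := orthonormal_iff_ite.mp u.orthonormal
    simp_rw [real_inner_smul_right, horth]
    simp only [mul_ite, mul_one, mul_zero]
    rw [Finset.sum_ite_eq Finset.univ i]
    simp [u.repr_apply_apply]
  have hParseval : ∀ x : EuclideanSpace ℝ (Fin K), ‖x‖ ^ 2 = ∑ i, (u.repr x i) ^ 2 := by
    intro x
    rw [← u.repr.norm_map x, EuclideanSpace.norm_eq, Real.sq_sqrt (by positivity)]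
    congr 1
    funext i
    rw [Real.norm_eq_abs, sq_abs]
  -- key lower bound
  have hkey : ∀ a : Fin K → ℤ, a ≠ 0 →
      1 ≤ ‖Dmap (g (fun i => (a i : ℝ)))‖ ^ 2 := by
    intro a ha0
    set ac : Fin K → ℝ := fun i => (a i : ℝ) with hac
    have hacne : ac ≠ 0 := by
      intro h
      apply ha0
      funext i
      have := congrFun h i
      simp only [Pi.zero_apply] at this ⊢
      have h2 : (a i : ℝ) = 0 := this
      exact_mod_cast h2
    set x : EuclideanSpace ℝ (Fin K) := g ac with hx
    have hxne : x ≠ 0 := by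
      rw [hx]
      simp only [ne_eq, EmbeddingLike.map_eq_zero_iff]
      exact hacne
    set S : Set (Fin K) := {j | x ∈ Submodule.span ℝ (w '' Set.Iic j)} with hS
    have hSne : S.Nonempty := by
      refine ⟨⟨K - 1, by omega⟩, ?_⟩
      have htop : Set.Iic (⟨K - 1, by omega⟩ : Fin K) = Set.univ := by
        ext i
        simp only [Set.mem_Iic, Set.mem_univ, iff_true, Fin.le_def]
        omega
      rw [hS, Set.mem_setOf_eq, htop, Set.image_univ,
        hwli.span_eq_top_of_card_eq_finrank (by simp [hrank])]
      trivial
    obtain ⟨j, hjS, hjmin⟩ := Set.exists_min_image S id S.toFinite hSne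
    have hnotin : x ∉ Submodule.span ℝ (w '' Set.Iio j) := by
      intro hxin
      by_cases hj0 : (j : ℕ) = 0
      · have : Set.Iio j = (∅ : Set (Fin K)) := by
          ext i
          simp only [Set.mem_Iio, Set.mem_empty_iff_false, iff_false, not_lt, Fin.le_def]
          omega
        rw [this, Set.image_empty, Submodule.span_empty, Submodule.mem_bot] at hxin
        exact hxne hxin
      · set j' : Fin K := ⟨(j : ℕ) - 1, by omega⟩ with hj'
        have hIio : Set.Iio j = Set.Iic j' := by
          ext i
          simp only [Set.mem_Iio, Set.mem_Iic, Fin.lt_def, Fin.le_def, hj']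
          omega
        rw [hIio] at hxin
        have : j ≤ j' := hjmin j' hxin
        rw [Fin.le_def] at this
        simp only [hj'] at this
        omega
    -- lower bound on ‖x‖
    have hlow : lam j ^ 2 ≤ ‖x‖ ^ 2 := by
      have himg : w '' Set.Iio j = ⇑g '' (vc '' Set.Iio j) := by
        rw [← Set.image_comp]
        rfl
      rw [himg, show ⇑g '' (vc '' Set.Iio j) = ⇑(g.toLinearMap) '' (vc '' Set.Iio j) from rfl,
        ← Submodule.map_span] at hnotin
      have hacnot : ac ∉ Submodule.span ℝ (vc '' Set.Iio j) := by
        intro h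
        exact hnotin ⟨ac, h, rfl⟩
      have := hmin j a hacnot
      rw [← hlamQ j] at this
      calc lam j ^ 2 ≤ ∑ i, (F.mulVec ac i) ^ 2 := this
        _ = ‖x‖ ^ 2 := by rw [hx, hgF, hφnorm]
    have hcoord : ∀ i, ¬ i ≤ j → u.repr x i = 0 := by
      intro i hij
      rw [u.repr_apply_apply]
      exact hvanish j x hjS i hij
    have hsum : ((lam j)⁻¹) ^ 2 * ‖x‖ ^ 2 ≤ ‖Dmap x‖ ^ 2 := by
      rw [hParseval x, hParseval (Dmap x), Finset.mul_sum]
      refine Finset.sum_le_sum fun i _ => ?_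
      rw [hDrepr]
      by_cases hij : i ≤ j
      · rw [mul_pow]
        have h1 : (lam j)⁻¹ ≤ (lam i)⁻¹ := inv_anti₀ (hlampos i) (hlammono i j hij)
        have h2 : ((lam j)⁻¹) ^ 2 ≤ ((lam i)⁻¹) ^ 2 := by
          apply pow_le_pow_left₀ (by positivity) h1
        exact mul_le_mul_of_nonneg_right h2 (sq_nonneg _)
      · rw [hcoord i hij]
        simp
    have : 1 ≤ ((lam j)⁻¹) ^ 2 * ‖x‖ ^ 2 := by
      have h1 : ((lam j)⁻¹) ^ 2 * (lam j ^ 2) = 1 := by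
        field_simp
        exact div_self (hlampos j).ne'
      calc (1:ℝ) = ((lam j)⁻¹) ^ 2 * (lam j ^ 2) := h1.symm
        _ ≤ ((lam j)⁻¹) ^ 2 * ‖x‖ ^ 2 :=
            mul_le_mul_of_nonneg_left hlow (by positivity)
    exact le_trans this hsum
  -- the matrix of the composite map
  set Mmap : (Fin K → ℝ) →ₗ[ℝ] (Fin K → ℝ) :=
    (φ.symm.toLinearMap.comp Dmap).comp g.toLinearMap with hMmap
  set M : Matrix (Fin K) (Fin K) ℝ := LinearMap.toMatrix' Mmap with hM
  have hMmulVec : ∀ y : Fin K → ℝ, M.mulVec y = φ.symm (Dmap (g y)) := by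
    intro y
    have : M.mulVec y = Matrix.toLin' M y := rfl
    rw [this, hM, Matrix.toLin'_toMatrix']
    rfl
  have hMdet : M.det = (∏ i, (lam i)⁻¹) * F.det := by
    rw [hM, LinearMap.det_toMatrix']
    have hMcomp : Mmap
        = ((φ.symm.toLinearMap.comp Dmap).comp φ.toLinearMap).comp (Matrix.toLin' F) := by
      apply LinearMap.ext
      intro y
      rfl
    rw [hMcomp, LinearMap.det_comp]
    have hconj : LinearMap.det ((φ.symm.toLinearMap.comp Dmap).comp φ.toLinearMap)
        = LinearMap.det Dmap := by
      have h := LinearMap.det_conj Dmap φ.symm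
      simpa [LinearMap.comp_assoc] using h
    rw [hconj, hDdet, LinearMap.det_toLin']
  have hMdet0 : M.det ≠ 0 := by
    rw [hMdet]
    refine mul_ne_zero ?_ hdet
    rw [Finset.prod_ne_zero_iff]
    exact fun i _ => inv_ne_zero (hlampos i).ne'
  obtain ⟨a, ha0, hab⟩ := aux_minkowski_stmt3 hK M hMdet0
  have hmain : (1:ℝ) ≤ (K:ℝ) * (|M.det| ^ ((K:ℝ)⁻¹)) ^ 2 := by
    refine le_trans ?_ hab
    have heq : ∑ i, (M.mulVec (fun i => (a i : ℝ)) i) ^ 2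
        = ‖Dmap (g (fun i => (a i : ℝ)))‖ ^ 2 := by
      rw [hMmulVec]
      calc ∑ i, ((φ.symm (Dmap (g (fun i => (a i : ℝ))))) i) ^ 2
          = ‖φ (φ.symm (Dmap (g (fun i => (a i : ℝ)))))‖ ^ 2 := (hφnorm _).symm
        _ = ‖Dmap (g (fun i => (a i : ℝ)))‖ ^ 2 := by rw [φ.apply_symm_apply]
    rw [heq]
    exact hkey a ha0
  set t : ℝ := (|M.det| ^ ((K:ℝ)⁻¹)) ^ 2 with ht
  have htnn : (0:ℝ) ≤ (K:ℝ) * t := le_trans zero_le_one hmain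
  have htK : t ^ K = M.det ^ 2 := by
    have h2 : t = |M.det| ^ ((2:ℝ) * (K:ℝ)⁻¹) := by
      rw [ht, ← Real.rpow_natCast (|M.det| ^ ((K:ℝ)⁻¹)) 2, ← Real.rpow_mul (abs_nonneg _)]
      norm_num [mul_comm]
    rw [h2, ← Real.rpow_natCast (|M.det| ^ ((2:ℝ) * (K:ℝ)⁻¹)) K,
      ← Real.rpow_mul (abs_nonneg _)]
    have h3 : (2:ℝ) * (K:ℝ)⁻¹ * (K:ℝ) = 2 := by
      field_simp
    rw [h3, show (2:ℝ) = ((2:ℕ):ℝ) by norm_num, Real.rpow_natCast, sq_abs]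
  have hfinal1 : (1:ℝ) ≤ (K:ℝ) ^ K * M.det ^ 2 := by
    calc (1:ℝ) ≤ ((K:ℝ) * t) ^ K := one_le_pow₀ hmain
      _ = (K:ℝ) ^ K * t ^ K := mul_pow _ _ _
      _ = (K:ℝ) ^ K * M.det ^ 2 := by rw [htK]
  have hMdet2 : M.det ^ 2 = F.det ^ 2 * (∏ i, lam i ^ 2)⁻¹ := by
    rw [hMdet, mul_pow, mul_comm]
    congr 1
    rw [← Finset.prod_pow, ← Finset.prod_inv_distrib]
    refine Finset.prod_congr rfl fun i _ => ?_
    rw [inv_pow]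
  refine ⟨v, hli, ?_⟩
  have hprod : ∏ k, (∑ i, (F.mulVec (fun i => (v k i : ℝ)) i) ^ 2) = ∏ k, lam k ^ 2 :=
    Finset.prod_congr rfl fun k _ => (hlamQ k).symm
  rw [hprod]
  have hP : (0:ℝ) < ∏ k, lam k ^ 2 := Finset.prod_pos fun k _ => pow_pos (hlampos k) 2
  rw [hMdet2] at hfinal1
  have h2 := mul_le_mul_of_nonneg_right hfinal1 hP.le
  calc ∏ k, lam k ^ 2 = 1 * ∏ k, lam k ^ 2 := (one_mul _).symm
    _ ≤ (K:ℝ) ^ K * (F.det ^ 2 * (∏ k, lam k ^ 2)⁻¹) * ∏ k, lam k ^ 2 := h2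
    _ = (K:ℝ) ^ K * F.det ^ 2 := by
        field_simp
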